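/- Let q be a real number with 0 < q < 1, let f be an odd positive integer, let x be a real number, and let m be a nonnegative integer. Then the q-Euler polynomials satisfy the distribution relation [f]_q^m · ∑_{a=0}^{f−1} (−1)^a · E_{m,q^f}((x+a)/f) = E_{m,q}(x), where E_{m,q^f} denotes the q-Euler polynomial with q replaced by q^f. -/

import Mathlib

open Filter Finset Topology

/-- The `q`-Euler polynomial `E_{n,q}(x) = 2·(1/(1−q))^n · ∑_{j=0}^n C(n,j)·(−1)^j·q^{xj}/(1+q^j)`,
where `q^{xj}` is a real power (`rpow`). -/
noncomputable def qEulerPoly (q : ℝ) (n : ℕ) (x : ℝ) : ℝ :=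
  2 * (1/(1-q))^n *
    ∑ j ∈ Finset.range (n+1), (n.choose j : ℝ) * (-1)^j * q ^ (x * (j:ℝ)) / (1 + q^j)

/-- distribution relation
`[f]_q^m · ∑_{a=0}^{f−1} (−1)^a · E_{m,q^f}((x+a)/f) = E_{m,q}(x)` for odd positive `f`. -/
theorem qEulerPoly_distribution (q : ℝ) (hq0 : 0 < q) (hq1 : q < 1)
    (f : ℕ) (hf : Odd f) (hfpos : 0 < f) (x : ℝ) (m : ℕ) :
    ((1 - q^f)/(1-q))^m *
      ∑ a ∈ Finset.range f, (-1:ℝ)^a * qEulerPoly (q^f) m ((x + (a:ℝ))/(f:ℝ))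
    = qEulerPoly q m x := by
  have hq0' : (0:ℝ) ≤ q := hq0.le
  have hfR : (0:ℝ) < (f:ℝ) := by exact_mod_cast hfpos
  have hqf1 : q^f < 1 := pow_lt_one₀ hq0' hq1 hfpos.ne'
  have h1qf : (0:ℝ) < 1 - q^f := by linarith
  have h1q : (0:ℝ) < 1 - q := by linarith
  unfold qEulerPoly
  have inner : ∀ j ∈ Finset.range (m+1),
      ∑ a ∈ Finset.range f, (-1:ℝ)^a *
        ((m.choose j : ℝ) * (-1)^j * (q^f) ^ (((x + (a:ℝ))/(f:ℝ)) * (j:ℝ)) / (1 + (q^f)^j))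
      = (m.choose j : ℝ) * (-1)^j * q ^ (x * (j:ℝ)) / (1 + q^j) := by
    intro j _
    have hqj : (0:ℝ) < 1 + q^j := by positivity
    have hqfj : (0:ℝ) < 1 + (q^f)^j := by positivity
    have hrp : ∀ a : ℕ, ((q:ℝ)^f) ^ (((x + (a:ℝ))/(f:ℝ)) * (j:ℝ)) = q ^ (x*(j:ℝ)) * (q^j)^a := by
      intro a
      rw [← Real.rpow_natCast q f, ← Real.rpow_mul hq0']
      have harg : (f:ℝ) * (((x + (a:ℝ))/(f:ℝ)) * (j:ℝ)) = x*(j:ℝ) + ((a*j : ℕ):ℝ) := by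
        push_cast; field_simp
      rw [harg, Real.rpow_add hq0, Real.rpow_natCast, pow_mul']
    have geom : ∑ a ∈ Finset.range f, (-1:ℝ)^a * (q^j)^a = (1 + (q^f)^j)/(1 + q^j) := by
      have hne : (-1:ℝ) * q^j ≠ 1 := by nlinarith [pow_pos hq0 j]
      simp_rw [← mul_pow]
      rw [geom_sum_eq hne]
      have hodd : ((-1:ℝ)*q^j)^f = -(q^j)^f := by
        rw [mul_pow, hf.neg_one_pow, neg_one_mul]
      rw [hodd]
      have h2 : ((q:ℝ)^j)^f = (q^f)^j := by rw [← pow_mul, ← pow_mul, Nat.mul_comm]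
      rw [h2]
      rw [div_eq_div_iff (by nlinarith [pow_pos hq0 j]) (ne_of_gt hqj)]
      ring
    calc ∑ a ∈ Finset.range f, (-1:ℝ)^a *
          ((m.choose j : ℝ) * (-1)^j * (q^f) ^ (((x + (a:ℝ))/(f:ℝ)) * (j:ℝ)) / (1 + (q^f)^j))
        = ((m.choose j : ℝ) * (-1)^j * q ^ (x*(j:ℝ)) / (1 + (q^f)^j)) *
            ∑ a ∈ Finset.range f, (-1:ℝ)^a * (q^j)^a := by
          rw [Finset.mul_sum]
          refine Finset.sum_congr rfl fun a _ => ?_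
          rw [hrp a]; ring
      _ = (m.choose j : ℝ) * (-1)^j * q ^ (x * (j:ℝ)) / (1 + q^j) := by
          rw [geom]
          field_simp
  calc ((1 - q^f)/(1-q))^m *
      ∑ a ∈ Finset.range f, (-1:ℝ)^a *
        (2 * (1/(1-q^f))^m *
          ∑ j ∈ Finset.range (m+1),
            (m.choose j : ℝ) * (-1)^j * (q^f) ^ (((x + (a:ℝ))/(f:ℝ)) * (j:ℝ)) / (1 + (q^f)^j))
      = ((1 - q^f)/(1-q))^m * (2 * (1/(1-q^f))^m) *
          ∑ j ∈ Finset.range (m+1), ∑ a ∈ Finset.range f, (-1:ℝ)^a *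
            ((m.choose j : ℝ) * (-1)^j * (q^f) ^ (((x + (a:ℝ))/(f:ℝ)) * (j:ℝ)) / (1 + (q^f)^j)) := by
        have h1 : ∀ a ∈ Finset.range f, (-1:ℝ)^a *
            (2 * (1/(1-q^f))^m *
              ∑ j ∈ Finset.range (m+1),
                (m.choose j : ℝ) * (-1)^j * (q^f) ^ (((x + (a:ℝ))/(f:ℝ)) * (j:ℝ)) / (1 + (q^f)^j))
            = ∑ j ∈ Finset.range (m+1), (2 * (1/(1-q^f))^m) * ((-1:ℝ)^a *
                ((m.choose j : ℝ) * (-1)^j * (q^f) ^ (((x + (a:ℝ))/(f:ℝ)) * (j:ℝ)) / (1 + (q^f)^j))) := by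
          intro a _
          rw [Finset.mul_sum, Finset.mul_sum]
          exact Finset.sum_congr rfl fun j _ => by ring
        rw [Finset.sum_congr rfl h1, Finset.sum_comm]
        simp_rw [← Finset.mul_sum]
        ring
    _ = ((1 - q^f)/(1-q))^m * (2 * (1/(1-q^f))^m) *
          ∑ j ∈ Finset.range (m+1), (m.choose j : ℝ) * (-1)^j * q ^ (x * (j:ℝ)) / (1 + q^j) := by
        rw [Finset.sum_congr rfl inner]
    _ = 2 * (1/(1-q))^m *
          ∑ j ∈ Finset.range (m+1), (m.choose j : ℝ) * (-1)^j * q ^ (x * (j:ℝ)) / (1 + q^j) := by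
        congr 1
        rw [div_pow, div_pow, div_pow, one_pow]
        field_simp
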